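/- For every n ≥ 2, the number f(n, 1) of isomorphism classes of simple pedigrees of depth 1 with constant population size n satisfies 2 · f(n, 1) ≥ (n − 1) · n^(n−2). -/

import Mathlib

/-- A simple pedigree of depth `d` with constant population size `n`: the vertex set is
the disjoint union of generations `X_0, …, X_d` (generation `i` being `{i} × Fin n`),
every arc goes from `X_i` to `X_{i-1}`, and there are disjoint sets `M` and `F` covering
the vertex set such that every vertex of `X_i` with `i < d` has exactly two parents,
one in `M` and one in `F` (vertices of `X_d`, the founders, have none by the level
condition). -/
structure SimplePedigree (n d : ℕ) where
  A : Fin (d + 1) × Fin n → Fin (d + 1) × Fin n → Prop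
  arc_level : ∀ u v, A u v → (u.1 : ℕ) = (v.1 : ℕ) + 1
  parents : ∃ M F : Set (Fin (d + 1) × Fin n), Disjoint M F ∧ M ∪ F = Set.univ ∧
    ∀ x : Fin (d + 1) × Fin n, (x.1 : ℕ) < d →
      ∃ u v, u ∈ M ∧ v ∈ F ∧ A u x ∧ A v x ∧ ∀ w, A w x → w = u ∨ w = v

/-- Two simple pedigrees on the same labelled extant set `X_0` are isomorphic if there
is a digraph isomorphism between them fixing each extant vertex. -/
def PedigreeIso {n d : ℕ} (P Q : SimplePedigree n d) : Prop :=
  ∃ φ : (Fin (d + 1) × Fin n) ≃ (Fin (d + 1) × Fin n),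
    (∀ u v, P.A u v ↔ Q.A (φ u) (φ v)) ∧
    ∀ j : Fin n, φ ((0 : Fin (d + 1)), j) = ((0 : Fin (d + 1)), j)

namespace PedLower

open Finset Function

attribute [local instance] Classical.propDecidable

abbrev K (m : ℕ) := Fin (m+3) × Fin (m+2) × (Fin m → Fin (m+3))

variable {m : ℕ}

def r1 (c : K m) : Fin (m+3) := c.1
def r2 (c : K m) : Fin (m+3) := c.1.succAbove c.2.1
def sq (c : K m) (i : ℕ) : Fin (m+3) := if h : i < m then c.2.2 ⟨i, h⟩ else r1 c

lemma r2_ne_r1 (c : K m) : r2 c ≠ r1 c := Fin.succAbove_ne _ _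

lemma sq_last (c : K m) : sq c m = r1 c := by simp [sq]

def cand (c : K m) (k : ℕ) (R : List (Fin (m+3))) : Finset (Fin (m+3)) :=
  Finset.univ.filter fun v => v ≠ r1 c ∧ v ≠ r2 c ∧ v ∉ R ∧
    ∀ i : ℕ, k ≤ i → i ≤ m → v ≠ sq c i

noncomputable def pick (c : K m) (k : ℕ) (R : List (Fin (m+3))) : Fin (m+3) :=
  if h : (cand c k R).Nonempty then (cand c k R).min' h else r1 c

noncomputable def ells (c : K m) : ℕ → List (Fin (m+3))
  | 0 => []
  | k+1 => ells c k ++ [pick c k (ells c k)]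

noncomputable def ell (c : K m) (k : ℕ) : Fin (m+3) := pick c k (ells c k)

lemma mem_ells {c : K m} {v : Fin (m+3)} {k : ℕ} :
    v ∈ ells c k ↔ ∃ j, j < k ∧ ell c j = v := by
  induction k with
  | zero => simp [ells]
  | succ k ih =>
      simp only [ells, List.mem_append, List.mem_singleton, ih]
      constructor
      · rintro (⟨j, hj, rfl⟩ | rfl)
        · exact ⟨j, by omega, rfl⟩
        · exact ⟨k, by omega, rfl⟩
      · rintro ⟨j, hj, rfl⟩
        rcases Nat.lt_or_ge j k with h | h
        · exact Or.inl ⟨j, h, rfl⟩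
        · have : j = k := by omega
          subst this; exact Or.inr rfl

lemma ells_length (c : K m) (k : ℕ) : (ells c k).length = k := by
  induction k with
  | zero => rfl
  | succ k ih => simp [ells, ih]

lemma cand_nonempty (c : K m) {k : ℕ} (hk : k ≤ m) :
    (cand c k (ells c k)).Nonempty := by
  classical
  set B : Finset (Fin (m+3)) :=
    insert (r2 c) ((ells c k).toFinset ∪ (Finset.Icc k m).image (sq c)) with hB
  have hcard : B.card ≤ m + 2 := by
    calc B.card ≤ ((ells c k).toFinset ∪ (Finset.Icc k m).image (sq c)).card + 1 :=
          Finset.card_insert_le _ _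
      _ ≤ ((ells c k).toFinset.card + ((Finset.Icc k m).image (sq c)).card) + 1 := by
          exact Nat.add_le_add_right (Finset.card_union_le _ _) 1
      _ ≤ (k + (m + 1 - k)) + 1 := by
          have h1 : (ells c k).toFinset.card ≤ k := by
            simpa [ells_length] using List.toFinset_card_le (ells c k)
          have h2 : ((Finset.Icc k m).image (sq c)).card ≤ m + 1 - k := by
            calc ((Finset.Icc k m).image (sq c)).card ≤ (Finset.Icc k m).card :=
                Finset.card_image_le
              _ = m + 1 - k := Nat.card_Icc k m
          omega
      _ ≤ m + 2 := by omega
  have hlt : B.card < Finset.univ.card (α := Fin (m+3)) := by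
    rw [Finset.card_univ, Fintype.card_fin]; omega
  have hne : (Finset.univ \ B).Nonempty := by
    rw [← Finset.card_pos]
    have := Finset.le_card_sdiff B (Finset.univ : Finset (Fin (m+3)))
    omega
  obtain ⟨v, hv⟩ := hne
  rw [Finset.mem_sdiff] at hv
  refine ⟨v, ?_⟩
  rw [cand, Finset.mem_filter]
  have hv2 : v ∉ B := hv.2
  rw [hB] at hv2
  simp only [Finset.mem_insert, Finset.mem_union, List.mem_toFinset, Finset.mem_image,
    not_or, not_exists] at hv2
  obtain ⟨hvr2, hvell, hvsq⟩ := hv2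
  refine ⟨Finset.mem_univ _, ?_, hvr2, hvell, ?_⟩
  · intro h
    exact hvsq m ⟨by simp [Finset.mem_Icc, hk], by rw [sq_last, h]⟩
  · intro i h1 h2 h
    exact hvsq i ⟨by simp [Finset.mem_Icc, h1, h2], h.symm⟩

lemma ell_mem_cand (c : K m) {k : ℕ} (hk : k ≤ m) :
    ell c k ∈ cand c k (ells c k) := by
  rw [ell, pick, dif_pos (cand_nonempty c hk)]
  exact Finset.min'_mem _ _

lemma ell_spec (c : K m) {k : ℕ} (hk : k ≤ m) :
    ell c k ≠ r1 c ∧ ell c k ≠ r2 c ∧ ell c k ∉ ells c k ∧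
      ∀ i : ℕ, k ≤ i → i ≤ m → ell c k ≠ sq c i := by
  have := ell_mem_cand c hk
  rw [cand, Finset.mem_filter] at this
  exact this.2

lemma ell_inj (c : K m) {j k : ℕ} (hjk : j < k) (hk : k ≤ m) : ell c j ≠ ell c k := by
  intro h
  exact (ell_spec c hk).2.2.1 (mem_ells.2 ⟨j, hjk, h⟩)

lemma ell_surj (c : K m) {v : Fin (m+3)} (h1 : v ≠ r1 c) (h2 : v ≠ r2 c) :
    ∃ k, k ≤ m ∧ ell c k = v := by
  classical
  set T : Finset (Fin (m+3)) := (Finset.range (m+1)).image (ell c) with hT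
  set NR : Finset (Fin (m+3)) := Finset.univ \ {r1 c, r2 c} with hNR
  have hsub : T ⊆ NR := by
    intro x hx
    rw [hT, Finset.mem_image] at hx
    obtain ⟨k, hk, rfl⟩ := hx
    rw [Finset.mem_range] at hk
    have := ell_spec c (by omega : k ≤ m)
    rw [hNR, Finset.mem_sdiff]
    simp [this.1, this.2.1]
  have hcardT : T.card = m + 1 := by
    rw [hT, Finset.card_image_of_injOn, Finset.card_range]
    intro a ha b hb hab
    simp only [Finset.coe_range, Set.mem_Iio] at ha hb
    by_contra hne
    rcases Nat.lt_or_ge a b with h | h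
    · exact ell_inj c h (by omega) hab
    · exact ell_inj c (by omega : b < a) (by omega) hab.symm
  have hcardNR : NR.card = m + 1 := by
    rw [hNR, Finset.card_sdiff_of_subset (by intro x hx; exact Finset.mem_univ x)]
    rw [Finset.card_univ, Fintype.card_fin]
    rw [Finset.card_insert_of_notMem (by simpa using (r2_ne_r1 c).symm), Finset.card_singleton]
    omega
  have hTeq : T = NR := Finset.eq_of_subset_of_card_le hsub (by omega)
  have hv : v ∈ NR := by rw [hNR, Finset.mem_sdiff]; simp [h1, h2]
  rw [← hTeq, hT, Finset.mem_image] at hv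
  obtain ⟨k, hk, hkv⟩ := hv
  exact ⟨k, by rw [Finset.mem_range] at hk; omega, hkv⟩

-- the function
noncomputable def DD (c : K m) : Fin (m+3) → Fin (m+3) := fun v =>
  match (List.range (m+1)).find? (fun k => ell c k == v) with
  | some k => sq c k
  | none => if v = r1 c then r2 c else r1 c

lemma find?_ell_eq_none (c : K m) {v : Fin (m+3)}
    (h : ∀ k, k ≤ m → ell c k ≠ v) :
    (List.range (m+1)).find? (fun k => ell c k == v) = none := by
  rw [List.find?_eq_none]
  intro k hk
  rw [List.mem_range] at hk
  simpa using h k (by omega)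

lemma DD_r1 (c : K m) : DD c (r1 c) = r2 c := by
  rw [DD, find?_ell_eq_none c (fun k hk h => (ell_spec c hk).1 h)]
  simp

lemma DD_r2 (c : K m) : DD c (r2 c) = r1 c := by
  rw [DD, find?_ell_eq_none c (fun k hk h => (ell_spec c hk).2.1 h)]
  simp [r2_ne_r1 c]

lemma DD_ell (c : K m) {k : ℕ} (hk : k ≤ m) : DD c (ell c k) = sq c k := by
  rw [DD]
  rcases hfind : (List.range (m+1)).find? (fun j => ell c j == ell c k) with _ | j
  · exfalso
    rw [List.find?_eq_none] at hfind
    exact (by simpa using hfind k (by rw [List.mem_range]; omega) : ell c k ≠ ell c k) rfl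
  · have h1 : ell c j = ell c k := by simpa using List.find?_some hfind
    have h2 : j ≤ m := by
      have := List.mem_of_find?_eq_some hfind
      rw [List.mem_range] at this; omega
    have : j = k := by
      by_contra hne
      rcases Nat.lt_or_ge j k with h | h
      · exact ell_inj c h hk h1
      · exact ell_inj c (by omega : k < j) h2 h1.symm
    subst this; rfl

lemma DD_no_fix (c : K m) (v : Fin (m+3)) : DD c v ≠ v := by
  by_cases h1 : v = r1 c
  · subst h1; rw [DD_r1]; exact r2_ne_r1 c
  by_cases h2 : v = r2 c
  · subst h2; rw [DD_r2]; exact fun h => r2_ne_r1 c h.symm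
  obtain ⟨k, hk, rfl⟩ := ell_surj c h1 h2
  rw [DD_ell c hk]
  exact fun h => (ell_spec c hk).2.2.2 k le_rfl hk h.symm

lemma sq_cases (c : K m) {k : ℕ} (hk : k ≤ m) :
    sq c k = r1 c ∨ sq c k = r2 c ∨ ∃ k', k < k' ∧ k' ≤ m ∧ sq c k = ell c k' := by
  by_cases h1 : sq c k = r1 c
  · exact Or.inl h1
  by_cases h2 : sq c k = r2 c
  · exact Or.inr (Or.inl h2)
  obtain ⟨k', hk', hke⟩ := ell_surj c h1 h2
  refine Or.inr (Or.inr ⟨k', ?_, hk', hke.symm⟩)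
  by_contra hle
  exact (ell_spec c hk').2.2.2 k (by omega) hk hke

lemma reach_aux (c : K m) : ∀ d k, k ≤ m → m - k ≤ d →
    ∃ p, 1 ≤ p ∧ ((DD c)^[p] (ell c k) = r1 c ∨ (DD c)^[p] (ell c k) = r2 c) := by
  intro d
  induction d with
  | zero =>
      intro k hk hd
      have hkm : k = m := by omega
      subst hkm
      refine ⟨1, le_rfl, Or.inl ?_⟩
      rw [Function.iterate_one, DD_ell c le_rfl, sq_last]
  | succ d ih =>
      intro k hk hd
      rcases sq_cases c hk with h | h | ⟨k', h1, h2, h3⟩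
      · exact ⟨1, le_rfl, Or.inl (by rw [Function.iterate_one, DD_ell c hk, h])⟩
      · exact ⟨1, le_rfl, Or.inr (by rw [Function.iterate_one, DD_ell c hk, h])⟩
      · obtain ⟨p, hp1, hp⟩ := ih k' h2 (by omega)
        refine ⟨p + 1, by omega, ?_⟩
        rw [Function.iterate_succ_apply, DD_ell c hk, h3]
        exact hp

lemma DD_reach (c : K m) (v : Fin (m+3)) :
    ∃ p, (DD c)^[p] v = r1 c ∨ (DD c)^[p] v = r2 c := by
  by_cases h1 : v = r1 c
  · exact ⟨0, Or.inl h1⟩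
  by_cases h2 : v = r2 c
  · exact ⟨0, Or.inr h2⟩
  obtain ⟨k, hk, rfl⟩ := ell_surj c h1 h2
  obtain ⟨p, _, hp⟩ := reach_aux c (m - k) k hk le_rfl
  exact ⟨p, hp⟩

lemma DD_not_twocyc (c : K m) {v : Fin (m+3)} (h1 : v ≠ r1 c) (h2 : v ≠ r2 c) :
    DD c (DD c v) ≠ v := by
  obtain ⟨k, hk, rfl⟩ := ell_surj c h1 h2
  rw [DD_ell c hk]
  rcases sq_cases c hk with h | h | ⟨k', hk1, hk2, h3⟩
  · rw [h, DD_r1]; exact fun hh => h2 hh.symm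
  · rw [h, DD_r2]; exact fun hh => h1 hh.symm
  · rw [h3, DD_ell c hk2]
    rcases sq_cases c hk2 with h | h | ⟨k'', hk1', hk2', h3'⟩
    · rw [h]; exact fun hh => h1 hh.symm
    · rw [h]; exact fun hh => h2 hh.symm
    · rw [h3']
      exact fun hh => ell_inj c (by omega : k < k'') hk2' hh.symm

lemma DD_twocyc_iff (c : K m) (v : Fin (m+3)) :
    DD c (DD c v) = v ↔ (v = r1 c ∨ v = r2 c) := by
  constructor
  · intro h
    by_contra hn
    push_neg at hn
    exact DD_not_twocyc c hn.1 hn.2 h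
  · rintro (rfl | rfl)
    · rw [DD_r1, DD_r2]
    · rw [DD_r2, DD_r1]


noncomputable def dep (c : K m) (v : Fin (m+3)) : ℕ := Nat.find (DD_reach c v)

lemma dep_root1 (c : K m) : dep c (r1 c) = 0 := by
  rw [dep, Nat.find_eq_zero]; exact Or.inl rfl

lemma dep_root2 (c : K m) : dep c (r2 c) = 0 := by
  rw [dep, Nat.find_eq_zero]; exact Or.inr rfl

lemma dep_pos (c : K m) {v : Fin (m+3)} (h1 : v ≠ r1 c) (h2 : v ≠ r2 c) :
    0 < dep c v := by
  rcases Nat.eq_zero_or_pos (dep c v) with h | h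
  · exfalso
    have := Nat.find_spec (DD_reach c v)
    rw [show Nat.find (DD_reach c v) = dep c v from rfl, h] at this
    simp only [Function.iterate_zero, id_eq] at this
    tauto
  · exact h

lemma dep_step (c : K m) {v : Fin (m+3)} (h1 : v ≠ r1 c) (h2 : v ≠ r2 c) :
    dep c (DD c v) = dep c v - 1 ∧
      (DD c)^[dep c (DD c v)] (DD c v) = (DD c)^[dep c v] v := by
  have hpos := dep_pos c h1 h2
  have hle : dep c (DD c v) ≤ dep c v - 1 := by
    apply Nat.find_le
    have : (DD c)^[(dep c v - 1) + 1] v = (DD c)^[dep c v - 1] (DD c v) :=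
      Function.iterate_succ_apply (DD c) _ v
    rw [show (dep c v - 1) + 1 = dep c v by omega] at this
    rw [← this]
    exact Nat.find_spec (DD_reach c v)
  have hge : dep c v ≤ dep c (DD c v) + 1 := by
    apply Nat.find_le
    rw [Function.iterate_succ_apply]
    exact Nat.find_spec (DD_reach c (DD c v))
  have heq : dep c (DD c v) = dep c v - 1 := by omega
  refine ⟨heq, ?_⟩
  rw [heq, ← Function.iterate_succ_apply]
  congr 1
  omega

noncomputable def chi (c : K m) (v : Fin (m+3)) : Bool :=
  decide (dep c v % 2 = 0) == decide ((DD c)^[dep c v] v = r1 c)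

lemma chi_flip (c : K m) (v : Fin (m+3)) : chi c (DD c v) ≠ chi c v := by
  by_cases h1 : v = r1 c
  · subst h1
    rw [DD_r1, chi, chi, dep_root1, dep_root2]
    simp [r2_ne_r1 c]
  by_cases h2 : v = r2 c
  · subst h2
    rw [DD_r2, chi, chi, dep_root1, dep_root2]
    simp [r2_ne_r1 c]
  · have hpos := dep_pos c h1 h2
    obtain ⟨hd, hit⟩ := dep_step c h1 h2
    rw [chi, chi, hd]
    rw [hd] at hit
    rw [hit]
    have : (dep c v - 1) % 2 = 0 ↔ ¬ (dep c v % 2 = 0) := by omega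
    rcases Decidable.em ((DD c)^[dep c v] v = r1 c) with h | h <;>
      rcases Decidable.em (dep c v % 2 = 0) with h' | h' <;>
      simp [h, h', this]


lemma suffix_iff (c : K m) {k : ℕ} (hk : k ≤ m) (v : Fin (m+3)) :
    (∀ i : ℕ, k ≤ i → i ≤ m → v ≠ sq c i) ↔
    (∀ w, w ≠ r1 c → w ≠ r2 c → w ∉ ells c k → DD c w ≠ v) := by
  constructor
  · intro h w hw1 hw2 hw3 hDD
    obtain ⟨i, him, rfl⟩ := ell_surj c hw1 hw2
    have hik : k ≤ i := by
      by_contra hlt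
      exact hw3 (mem_ells.2 ⟨i, by omega, rfl⟩)
    rw [DD_ell c him] at hDD
    exact h i hik him hDD.symm
  · intro h i h1 h2 hv
    have hi := ell_spec c h2
    have hnot : ell c i ∉ ells c k := by
      intro hmem
      obtain ⟨j, hj, hji⟩ := mem_ells.1 hmem
      exact ell_inj c (by omega : j < i) h2 hji
    exact h (ell c i) hi.1 hi.2.1 hnot (by rw [DD_ell c h2]; exact hv.symm)

lemma ell_eq_of_DD_eq {c c' : K m} (h : DD c = DD c') {k : ℕ} (hk : k ≤ m)
    (hE : ells c k = ells c' k) : ell c k = ell c' k := by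
  have hroot : ∀ v : Fin (m+3), (v = r1 c ∨ v = r2 c) ↔ (v = r1 c' ∨ v = r2 c') := by
    intro v
    rw [← DD_twocyc_iff c v, ← DD_twocyc_iff c' v, h]
  have hcand : cand c k (ells c k) = cand c' k (ells c' k) := by
    apply Finset.ext
    intro v
    rw [cand, cand, Finset.mem_filter, Finset.mem_filter]
    constructor
    · rintro ⟨-, hv1, hv2, hv3, hv4⟩
      have hv1' : v ≠ r1 c' ∧ v ≠ r2 c' := by
        have := (not_iff_not.2 (hroot v)).1 (by tauto)
        tauto
      refine ⟨Finset.mem_univ _, hv1'.1, hv1'.2, by rwa [← hE], ?_⟩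
      rw [suffix_iff c' hk v]
      intro w hw1 hw2 hw3 hDD
      have hw1' : w ≠ r1 c ∧ w ≠ r2 c := by
        have := (not_iff_not.2 (hroot w)).2 (by tauto)
        tauto
      rw [← hE] at hw3
      rw [← h] at hDD
      exact ((suffix_iff c hk v).1 hv4) w hw1'.1 hw1'.2 hw3 hDD
    · rintro ⟨-, hv1, hv2, hv3, hv4⟩
      have hv1' : v ≠ r1 c ∧ v ≠ r2 c := by
        have := (not_iff_not.2 (hroot v)).2 (by tauto)
        tauto
      refine ⟨Finset.mem_univ _, hv1'.1, hv1'.2, by rwa [hE], ?_⟩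
      rw [suffix_iff c hk v]
      intro w hw1 hw2 hw3 hDD
      have hw1' : w ≠ r1 c' ∧ w ≠ r2 c' := by
        have := (not_iff_not.2 (hroot w)).1 (by tauto)
        tauto
      rw [hE] at hw3
      rw [h] at hDD
      exact ((suffix_iff c' hk v).1 hv4) w hw1'.1 hw1'.2 hw3 hDD
  have hgen : ∀ (s t : Finset (Fin (m+3))) (hs : s.Nonempty) (ht : t.Nonempty),
      s = t → s.min' hs = t.min' ht := by
    rintro s t hs ht rfl; rfl
  rw [ell, ell, pick, pick, dif_pos (cand_nonempty c hk), dif_pos (cand_nonempty c' hk)]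
  exact hgen _ _ _ _ (by rw [hcand])

lemma ells_eq_of_DD_eq {c c' : K m} (h : DD c = DD c') :
    ∀ k, k ≤ m + 1 → ells c k = ells c' k := by
  intro k
  induction k with
  | zero => intro _; rfl
  | succ k ih =>
      intro hk
      have hE := ih (by omega)
      show ells c k ++ [pick c k (ells c k)] = ells c' k ++ [pick c' k (ells c' k)]
      have hp : pick c k (ells c k) = pick c' k (ells c' k) :=
        ell_eq_of_DD_eq h (by omega) hE
      rw [hp, hE]

lemma DD_inj {c c' : K m} (h : DD c = DD c') : c = c' := by
  have hell : ∀ k, k ≤ m → ell c k = ell c' k := fun k hk =>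
    ell_eq_of_DD_eq h hk (ells_eq_of_DD_eq h k (by omega))
  have hr1 : r1 c = r1 c' := by
    have h1 : DD c (ell c m) = r1 c := by rw [DD_ell c le_rfl, sq_last]
    have h2 : DD c' (ell c' m) = r1 c' := by rw [DD_ell c' le_rfl, sq_last]
    rw [← h1, ← h2, hell m le_rfl, h]
  have hr2 : r2 c = r2 c' := by
    rw [← DD_r1 c, ← DD_r1 c', hr1, h]
  have h1 : c.1 = c'.1 := hr1
  have h21 : c.2.1 = c'.2.1 := by
    apply Fin.succAbove_right_injective (p := c.1)
    show r2 c = c.1.succAbove c'.2.1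
    rw [hr2, r2, h1]
  have h22 : c.2.2 = c'.2.2 := by
    funext i
    have him : (i : ℕ) ≤ m := by omega
    have e1 : sq c i = c.2.2 i := by
      rw [sq, dif_pos i.isLt]
    have e2 : sq c' i = c'.2.2 i := by
      rw [sq, dif_pos i.isLt]
    rw [← e1, ← e2, ← DD_ell c him, ← DD_ell c' him, hell i him, h]
  exact Prod.ext h1 (Prod.ext h21 h22)


lemma pedigreeIso_equivalence (n d : ℕ) : Equivalence (@PedigreeIso n d) := by
  constructor
  · intro P
    exact ⟨Equiv.refl _, fun u v => Iff.rfl, fun j => rfl⟩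
  · rintro P Q ⟨φ, hA, hfix⟩
    refine ⟨φ.symm, fun u v => ?_, fun j => ?_⟩
    · have := hA (φ.symm u) (φ.symm v)
      rw [Equiv.apply_symm_apply, Equiv.apply_symm_apply] at this
      exact this.symm
    · exact φ.injective (by rw [Equiv.apply_symm_apply, hfix])
  · rintro P Q R ⟨φ, hA, hfix⟩ ⟨ψ, hA', hfix'⟩
    refine ⟨φ.trans ψ, fun u v => ?_, fun j => ?_⟩
    · rw [hA u v, hA' (φ u) (φ v)]; rfl
    · show ψ (φ _) = _
      rw [hfix j, hfix' j]

def pedOf {n : ℕ} (f : Fin n → Fin n) (χ : Fin n → Bool)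
    (hχ : ∀ v, χ (f v) ≠ χ v) : SimplePedigree n 1 where
  A := fun u x => (u.1 : ℕ) = 1 ∧ (x.1 : ℕ) = 0 ∧ (u.2 = x.2 ∨ u.2 = f x.2)
  arc_level := fun u v h => by rw [h.1, h.2.1]
  parents := by
    refine ⟨{x | (x.1 : ℕ) = 0 ∨ χ x.2 = true}, {x | ¬((x.1 : ℕ) = 0 ∨ χ x.2 = true)},
      ?_, ?_, ?_⟩
    · rw [Set.disjoint_left]
      intro a ha hb
      exact hb ha
    · apply Set.eq_univ_of_forall
      intro x
      by_cases h : (x.1 : ℕ) = 0 ∨ χ x.2 = true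
      · exact Or.inl h
      · exact Or.inr h
    · intro x hx
      have hx0 : (x.1 : ℕ) = 0 := by omega
      have fin2 : ∀ y : Fin 2, (y : ℕ) = 1 → y = 1 := by decide
      by_cases hcx : χ x.2 = true
      · refine ⟨((1 : Fin 2), x.2), ((1 : Fin 2), f x.2), Or.inr hcx, ?_,
          ⟨rfl, hx0, Or.inl rfl⟩, ⟨rfl, hx0, Or.inr rfl⟩, ?_⟩
        · intro hmem
          rcases hmem with h0 | h1
          · exact absurd h0 (by norm_num)
          · exact hχ x.2 (by rw [h1, hcx])
        · rintro w ⟨hw1, -, hw2 | hw2⟩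
          · left; exact Prod.ext (fin2 w.1 hw1) hw2
          · right; exact Prod.ext (fin2 w.1 hw1) hw2
      · have hcx0 : χ x.2 = false := by simpa using hcx
        have hcf : χ (f x.2) = true := by
          rcases Bool.eq_false_or_eq_true (χ (f x.2)) with h | h
          · exact h
          · exact absurd (h.trans hcx0.symm) (hχ x.2)
        refine ⟨((1 : Fin 2), f x.2), ((1 : Fin 2), x.2), Or.inr hcf, ?_,
          ⟨rfl, hx0, Or.inr rfl⟩, ⟨rfl, hx0, Or.inl rfl⟩, ?_⟩
        · intro hmem
          rcases hmem with h0 | h1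
          · exact absurd h0 (by norm_num)
          · exact hcx h1
        · rintro w ⟨hw1, -, hw2 | hw2⟩
          · right; exact Prod.ext (fin2 w.1 hw1) hw2
          · left; exact Prod.ext (fin2 w.1 hw1) hw2

lemma pedOf_A {n : ℕ} (f : Fin n → Fin n) (χ : Fin n → Bool)
    (hχ : ∀ v, χ (f v) ≠ χ v) (u x : Fin 2 × Fin n) :
    (pedOf f χ hχ).A u x ↔
      ((u.1 : ℕ) = 1 ∧ (x.1 : ℕ) = 0 ∧ (u.2 = x.2 ∨ u.2 = f x.2)) := Iff.rfl

lemma iso_sigma {n : ℕ} {f f' : Fin n → Fin n} {χ χ' : Fin n → Bool}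
    {hχ : ∀ v, χ (f v) ≠ χ v} {hχ' : ∀ v, χ' (f' v) ≠ χ' v}
    (h : PedigreeIso (pedOf f χ hχ) (pedOf f' χ' hχ')) :
    ∃ σ σ' : Fin n → Fin n, (∀ v, σ (σ' v) = v) ∧ (∀ v, σ' (σ v) = v) ∧
      ∀ u j : Fin n, (u = j ∨ u = f j) ↔ (σ u = j ∨ σ u = f' j) := by
  obtain ⟨φ, hA, hfix⟩ := h
  have fin2 : ∀ x : Fin 2, x = 0 ∨ x = 1 := by decide
  have hsymmfix : ∀ j : Fin n, φ.symm ((0 : Fin 2), j) = ((0 : Fin 2), j) := by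
    intro j
    exact φ.injective (by rw [Equiv.apply_symm_apply, hfix])
  have hlev : ∀ i : Fin n, (φ ((1 : Fin 2), i)).1 = 1 := by
    intro i
    rcases fin2 (φ ((1 : Fin 2), i)).1 with h0 | h1
    · exfalso
      have he : φ ((1 : Fin 2), i) = ((0 : Fin 2), (φ ((1 : Fin 2), i)).2) :=
        Prod.ext h0 rfl
      have h3 : ((1 : Fin 2), i) = ((0 : Fin 2), (φ ((1 : Fin 2), i)).2) :=
        φ.injective (he.trans (hfix _).symm)
      exact absurd (congrArg Prod.fst h3) (by decide : ¬(1 : Fin 2) = 0)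
    · exact h1
  have hlev' : ∀ i : Fin n, (φ.symm ((1 : Fin 2), i)).1 = 1 := by
    intro i
    rcases fin2 (φ.symm ((1 : Fin 2), i)).1 with h0 | h1
    · exfalso
      have he : φ.symm ((1 : Fin 2), i) = ((0 : Fin 2), (φ.symm ((1 : Fin 2), i)).2) :=
        Prod.ext h0 rfl
      have h3 : ((1 : Fin 2), i) = ((0 : Fin 2), (φ.symm ((1 : Fin 2), i)).2) :=
        φ.symm.injective (he.trans (hsymmfix _).symm)
      exact absurd (congrArg Prod.fst h3) (by decide : ¬(1 : Fin 2) = 0)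
    · exact h1
  refine ⟨fun i => (φ ((1 : Fin 2), i)).2, fun i => (φ.symm ((1 : Fin 2), i)).2,
    ?_, ?_, ?_⟩
  · intro v
    have h1 : φ.symm ((1 : Fin 2), v) = ((1 : Fin 2), (φ.symm ((1 : Fin 2), v)).2) :=
      Prod.ext (hlev' v) rfl
    have h2 : φ (φ.symm ((1 : Fin 2), v)) = ((1 : Fin 2), v) := Equiv.apply_symm_apply _ _
    rw [h1] at h2
    exact congrArg Prod.snd h2
  · intro v
    have h1 : φ ((1 : Fin 2), v) = ((1 : Fin 2), (φ ((1 : Fin 2), v)).2) :=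
      Prod.ext (hlev v) rfl
    have h2 : φ.symm (φ ((1 : Fin 2), v)) = ((1 : Fin 2), v) := Equiv.symm_apply_apply _ _
    rw [h1] at h2
    exact congrArg Prod.snd h2
  · intro u j
    have := hA ((1 : Fin 2), u) ((0 : Fin 2), j)
    rw [hfix j, show φ ((1 : Fin 2), u) = ((1 : Fin 2), (φ ((1 : Fin 2), u)).2) from
      Prod.ext (hlev u) rfl] at this
    rw [pedOf_A, pedOf_A] at this
    simpa using this

lemma sigma_rigid {n : ℕ} (f f' σ σ' : Fin n → Fin n) (a b : Fin n) (hab : a ≠ b)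
    (hfa : f a = b) (hfb : f b = a)
    (hnf : ∀ v, f v ≠ v) (hnf' : ∀ v, f' v ≠ v)
    (hreach : ∀ v, ∃ p, f^[p] v = a ∨ f^[p] v = b)
    (hσσ' : ∀ v, σ (σ' v) = v) (hσ'σ : ∀ v, σ' (σ v) = v)
    (hstar : ∀ u j : Fin n, (u = j ∨ u = f j) ↔ (σ u = j ∨ σ u = f' j)) :
    f' = f ∨ f' = fun j => if j = a ∨ j = b then f j else Equiv.swap a b (f j) := by
  classical
  have σinj : Function.Injective σ := by
    intro x y hxy
    rw [← hσ'σ x, ← hσ'σ y, hxy]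
  have h1 : ∀ j, σ j = j ∨ σ j = f' j := fun j => (hstar j j).1 (Or.inl rfl)
  have h2 : ∀ j, σ (f j) = j ∨ σ (f j) = f' j := fun j => (hstar (f j) j).1 (Or.inr rfl)
  have h3 : ∀ j, σ j ≠ j → σ (f j) = j := by
    intro j hj
    have h4 : σ' j = j ∨ σ' j = f j := (hstar (σ' j) j).2 (Or.inl (hσσ' j))
    rcases h4 with h4 | h4
    · exfalso
      apply hj
      have h5 := congrArg σ h4
      rw [hσσ'] at h5
      exact h5.symm
    · rw [← h4, hσσ']
  have h5 : ∀ j, σ j ≠ j → σ (f j) ≠ f j := by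
    intro j hj
    rw [h3 j hj]
    exact fun h => hnf j h.symm
  have h6 : ∀ i j, σ i ≠ i → σ j ≠ j → f i = f j → i = j := by
    intro i j hi hj hij
    rw [← h3 i hi, ← h3 j hj, hij]
  have h7 : ∀ p w, σ w ≠ w → (f^[p] w = a ∨ f^[p] w = b) → (w = a ∨ w = b) := by
    intro p
    induction p with
    | zero => intro w _ h; simpa using h
    | succ p ih =>
        intro w hw hit
        rw [Function.iterate_succ_apply] at hit
        have hfwS : σ (f w) ≠ f w := h5 w hw
        rcases ih (f w) hfwS hit with hfw | hfw
        · have haS : σ a ≠ a := hfw ▸ hfwS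
          have hbS : σ b ≠ b := by
            have := h5 a haS
            rwa [hfa] at this
          right
          exact h6 w b hw hbS (by rw [hfw, hfb])
        · have hbS : σ b ≠ b := hfw ▸ hfwS
          have haS : σ a ≠ a := by
            have := h5 b hbS
            rwa [hfb] at this
          left
          exact h6 w a hw haS (by rw [hfw, hfa])
  have h8 : ∀ w, σ w ≠ w → (w = a ∨ w = b) := by
    intro w hw
    obtain ⟨p, hp⟩ := hreach w
    exact h7 p w hw hp
  by_cases hid : ∀ v, σ v = v
  · left
    funext j
    rcases h2 j with h | h
    · exfalso
      have hh := hid (f j)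
      rw [h] at hh
      exact hnf j hh.symm
    · rw [← h, hid]
  · right
    push_neg at hid
    obtain ⟨w, hw⟩ := hid
    have habS : σ a ≠ a ∧ σ b ≠ b := by
      rcases h8 w hw with rfl | rfl
      · constructor
        · exact hw
        · have := h5 w hw; rwa [hfa] at this
      · constructor
        · have := h5 w hw; rwa [hfb] at this
        · exact hw
    have hσb : σ b = a := by
      have := h3 a habS.1
      rwa [hfa] at this
    have hσa : σ a = b := by
      have := h3 b habS.2
      rwa [hfb] at this
    have hσelse : ∀ v, v ≠ a → v ≠ b → σ v = v := by
      intro v hva hvb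
      by_contra hv
      rcases h8 v hv with rfl | rfl
      · exact hva rfl
      · exact hvb rfl
    funext j
    by_cases hja : j = a
    · subst hja
      rcases h1 j with h | h
      · exact absurd h habS.1
      · rw [if_pos (Or.inl rfl), ← h, hσa, hfa]
    by_cases hjb : j = b
    · subst hjb
      rcases h1 j with h | h
      · exact absurd h habS.2
      · rw [if_pos (Or.inr rfl), ← h, hσb, hfb]
    · rw [if_neg (by tauto)]
      have hσj : σ j = j := hσelse j hja hjb
      rcases h2 j with h | h
      · exfalso
        by_cases hfja : f j = a
        · rw [hfja, hσa] at h
          exact hjb h.symm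
        by_cases hfjb : f j = b
        · rw [hfjb, hσb] at h
          exact hja h.symm
        · rw [hσelse (f j) hfja hfjb] at h
          exact hnf j h
      · rw [← h]
        by_cases hfja : f j = a
        · rw [hfja, hσa, Equiv.swap_apply_left]
        by_cases hfjb : f j = b
        · rw [hfjb, hσb, Equiv.swap_apply_right]
        · rw [hσelse (f j) hfja hfjb, Equiv.swap_apply_of_ne_of_ne hfja hfjb]


noncomputable def ped (c : K m) : SimplePedigree (m+3) 1 :=
  pedOf (DD c) (chi c) (chi_flip c)

lemma ped_fiber {c₀ c' : K m} (h : PedigreeIso (ped c₀) (ped c')) :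
    DD c' = DD c₀ ∨ DD c' = fun j =>
      if j = r1 c₀ ∨ j = r2 c₀ then DD c₀ j else Equiv.swap (r1 c₀) (r2 c₀) (DD c₀ j) := by
  obtain ⟨σ, σ', hσσ', hσ'σ, hstar⟩ := iso_sigma h
  exact sigma_rigid (DD c₀) (DD c') σ σ' (r1 c₀) (r2 c₀) (r2_ne_r1 c₀).symm
    (DD_r1 c₀) (DD_r2 c₀) (DD_no_fix c₀) (DD_no_fix c') (DD_reach c₀) hσσ' hσ'σ hstar

instance : Finite (SimplePedigree (m+3) 1) := by
  apply Finite.of_injective (fun P => P.A)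
  intro P Q h
  cases P
  cases Q
  simp only at h
  subst h
  rfl

lemma main_ge3 (m : ℕ) :
    (m + 2) * (m + 3) ^ (m + 1) ≤ 2 * Nat.card (Quot (@PedigreeIso (m+3) 1)) := by
  classical
  haveI : Finite (Quot (@PedigreeIso (m+3) 1)) :=
    Finite.of_surjective _ (Quot.mk_surjective (r := @PedigreeIso (m+3) 1))
  letI : Fintype (Quot (@PedigreeIso (m+3) 1)) := Fintype.ofFinite _
  set Fq : K m → Quot (@PedigreeIso (m+3) 1) := fun c => Quot.mk _ (ped c) with hFq
  have hfib : ∀ q ∈ Finset.univ.image Fq,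
      (Finset.univ.filter fun c => Fq c = q).card ≤ 2 := by
    intro q hq
    rw [Finset.mem_image] at hq
    obtain ⟨c₀, -, hc₀⟩ := hq
    set F2 : Fin (m+3) → Fin (m+3) := fun j =>
      if j = r1 c₀ ∨ j = r2 c₀ then DD c₀ j else Equiv.swap (r1 c₀) (r2 c₀) (DD c₀ j)
      with hF2
    have hsub : (Finset.univ.filter fun c => Fq c = q) ⊆
        insert c₀ (Finset.univ.filter fun c => DD c = F2) := by
      intro c' hc'
      rw [Finset.mem_filter] at hc'
      have hiso : PedigreeIso (ped c₀) (ped c') := by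
        have heq : Quot.mk (@PedigreeIso (m+3) 1) (ped c₀) =
            Quot.mk (@PedigreeIso (m+3) 1) (ped c') := by
          rw [show Quot.mk (@PedigreeIso (m+3) 1) (ped c₀) = q from hc₀,
            ← hc'.2]
        have := Quot.eq.1 heq
        exact (Equivalence.eqvGen_iff (pedigreeIso_equivalence (m+3) 1)).1 this
      rcases ped_fiber hiso with h | h
      · rw [Finset.mem_insert]
        exact Or.inl (DD_inj h)
      · rw [Finset.mem_insert, Finset.mem_filter]
        exact Or.inr ⟨Finset.mem_univ _, h⟩
    calc (Finset.univ.filter fun c => Fq c = q).card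
        ≤ (insert c₀ (Finset.univ.filter fun c => DD c = F2)).card :=
          Finset.card_le_card hsub
      _ ≤ (Finset.univ.filter fun c => DD c = F2).card + 1 := Finset.card_insert_le _ _
      _ ≤ 1 + 1 := by
          have : (Finset.univ.filter fun c => DD c = F2).card ≤ 1 := by
            rw [Finset.card_le_one]
            intro a ha b hb
            rw [Finset.mem_filter] at ha hb
            exact DD_inj (ha.2.trans hb.2.symm)
          omega
      _ = 2 := rfl
  have h1 := Finset.card_le_mul_card_image (s := (Finset.univ : Finset (K m))) (f := Fq)
    2 hfib
  have h2 : (Finset.univ.image Fq).card ≤ Fintype.card (Quot (@PedigreeIso (m+3) 1)) := by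
    rw [← Finset.card_univ]
    exact Finset.card_le_card (Finset.subset_univ _)
  have h3 : Fintype.card (K m) = (m + 3) * ((m + 2) * (m + 3) ^ m) := by
    simp [Fintype.card_prod, Fintype.card_fun]
  have h4 : (m + 2) * (m + 3) ^ (m + 1) = (m + 3) * ((m + 2) * (m + 3) ^ m) := by
    rw [pow_succ]
    ring
  rw [Nat.card_eq_fintype_card]
  calc (m + 2) * (m + 3) ^ (m + 1)
      = Fintype.card (K m) := by rw [h3, h4]
    _ ≤ 2 * (Finset.univ.image Fq).card := by
        rw [← Finset.card_univ (α := K m)]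
        exact h1
    _ ≤ 2 * Fintype.card (Quot (@PedigreeIso (m+3) 1)) := by omega

end PedLower

/-- For every `n ≥ 2`, the number `f(n,1)` of isomorphism classes of simple pedigrees of
depth `1` with constant population size `n` satisfies `2 * f(n,1) ≥ (n-1) * n^(n-2)`. -/
theorem f_n_one_lower_bound (n : ℕ) (hn : 2 ≤ n) :
    (n - 1) * n ^ (n - 2) ≤ 2 * Nat.card (Quot (@PedigreeIso n 1)) := by
  obtain ⟨k, rfl⟩ : ∃ k, n = 2 + k := ⟨n - 2, by omega⟩
  cases k with
  | zero =>
      haveI : Finite (SimplePedigree 2 1) := by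
        apply Finite.of_injective (fun P => P.A)
        intro P Q h
        cases P
        cases Q
        simp only at h
        subst h
        rfl
      haveI : Finite (Quot (@PedigreeIso 2 1)) :=
        Finite.of_surjective _ (Quot.mk_surjective (r := @PedigreeIso 2 1))
      haveI : Nonempty (Quot (@PedigreeIso 2 1)) :=
        ⟨Quot.mk _ (PedLower.pedOf (fun j : Fin 2 => j + 1) (fun j => j == 0) (by decide))⟩
      have hp := Nat.card_pos (α := Quot (@PedigreeIso 2 1))
      have hgoal : (2 + 0 - 1) * (2 + 0) ^ (2 + 0 - 2) = 1 := by norm_num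
      rw [hgoal]
      omega
  | succ j =>
      have hn3 : 2 + (j + 1) = j + 3 := by omega
      rw [hn3]
      exact PedLower.main_ge3 j
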